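/- (Deligne's twisting formula) Let α, β be characters of F^× with a(α) ≥ 2·a(β), ψ a nontrivial additive character of F, and c ∈ F^× with ν_F(c) = a(α)+n(ψ) satisfying α(1+x) = ψ(x/c) for all x with ν_F(x) ≥ a(α)/2. Then ε(αβ, ψ) = β(c)·ε(α, ψ). -/

import Mathlib

open scoped BigOperators

/-- Valuation data for a non-Archimedean local field `F`:
a surjective discrete valuation `ν` (recorded via a uniformizer `π` of valuation 1),
and the residue cardinality `q`. -/
structure VData (F : Type) [Field F] where
  ν : F → ℤ
  π : F
  hπ0 : π ≠ 0
  hπ1 : ν π = 1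
  hmul : ∀ x y : F, x ≠ 0 → y ≠ 0 → ν (x * y) = ν x + ν y
  hadd : ∀ x y : F, x ≠ 0 → y ≠ 0 → x + y ≠ 0 → min (ν x) (ν y) ≤ ν (x + y)
  q : ℕ
  hq : 1 < q

variable {F : Type} [Field F]

/-- The fractional ideal `P_F^k = {x : ν x ≥ k}`. -/
def Pid (V : VData F) (k : ℤ) : Set F := {x | x = 0 ∨ k ≤ V.ν x}

/-- The unit group `O_F^× = {x ≠ 0 : ν x = 0}`. -/
def Uni (V : VData F) : Set F := {x | x ≠ 0 ∧ V.ν x = 0}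

/-- `χ : F → ℂ` is a multiplicative character of `F^×`. -/
def IsMulChar (χ : F → ℂ) : Prop :=
  (∀ x : F, x ≠ 0 → χ x ≠ 0) ∧ ∀ x y : F, x ≠ 0 → y ≠ 0 → χ (x * y) = χ x * χ y

/-- `χ` is trivial on `U_F^a` (with `U_F^0 = O_F^×`, and `U_F^a = 1 + P_F^a` for `a ≥ 1`). -/
def TrivOn (V : VData F) (χ : F → ℂ) (a : ℤ) : Prop :=
  if a ≤ 0 then ∀ x ∈ Uni V, χ x = 1 else ∀ y ∈ Pid V a, χ (1 + y) = 1

/-- `a` is the conductor `a(χ)`: the smallest integer `≥ 0` with `χ` trivial on `U_F^a`. -/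
def IsMulConductor (V : VData F) (χ : F → ℂ) (a : ℤ) : Prop :=
  0 ≤ a ∧ TrivOn V χ a ∧ ∀ b : ℤ, 0 ≤ b → TrivOn V χ b → a ≤ b

/-- `ψ : F → ℂ` is a nontrivial additive character of `F`. -/
def IsAddChar (ψ : F → ℂ) : Prop :=
  (∀ x y : F, ψ (x + y) = ψ x * ψ y) ∧ ∃ x : F, ψ x ≠ 1

/-- `n` is the conductor `n(ψ)`: `ψ` is trivial on `P_F^{-n}` but not on `P_F^{-n-1}`. -/
def IsAddConductor (V : VData F) (ψ : F → ℂ) (n : ℤ) : Prop :=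
  (∀ x ∈ Pid V (-n), ψ x = 1) ∧ ∃ x ∈ Pid V (-n - 1), ψ x ≠ 1

/-- `S` is a (finite) set of coset representatives for `(1 + P_F^m)/(1 + P_F^k)`. -/
def MulReps (V : VData F) (m k : ℤ) (S : Finset F) : Prop :=
  (∀ s ∈ S, s - 1 ∈ Pid V m) ∧
    ∀ x : F, x - 1 ∈ Pid V m → ∃! s, s ∈ S ∧ x * s⁻¹ - 1 ∈ Pid V k

/-- `T` is a set of coset representatives for `O_F^×/(1 + P_F^k)`. -/
def UnitReps (V : VData F) (k : ℤ) (T : Finset F) : Prop :=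
  (∀ t ∈ T, t ∈ Uni V) ∧ ∀ x ∈ Uni V, ∃! t, t ∈ T ∧ x * t⁻¹ - 1 ∈ Pid V k

/-- `Y` is a set of coset representatives for the additive quotient `P_F^j/P_F^k`. -/
def AddReps (V : VData F) (j k : ℤ) (Y : Finset F) : Prop :=
  (∀ y ∈ Y, y ∈ Pid V j) ∧ ∀ x ∈ Pid V j, ∃! y, y ∈ Y ∧ x - y ∈ Pid V k

section Aux
variable {F : Type} [Field F] (V : VData F)

lemma nu_one : V.ν 1 = 0 := by
  have h := V.hmul 1 1 one_ne_zero one_ne_zero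
  rw [mul_one] at h; omega

lemma nu_neg_one : V.ν (-1) = 0 := by
  have h := V.hmul (-1) (-1) (by norm_num) (by norm_num)
  rw [neg_mul_neg, one_mul] at h
  have := nu_one V; omega

lemma nu_neg {x : F} (hx : x ≠ 0) : V.ν (-x) = V.ν x := by
  have h := V.hmul (-1) x (by norm_num) hx
  rw [neg_one_mul] at h
  rw [h, nu_neg_one]; ring

lemma nu_inv {x : F} (hx : x ≠ 0) : V.ν x⁻¹ = -V.ν x := by
  have h := V.hmul x x⁻¹ hx (inv_ne_zero hx)
  rw [mul_inv_cancel₀ hx, nu_one] at h; omega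

lemma zero_mem_Pid (k : ℤ) : (0 : F) ∈ Pid V k := Or.inl rfl

lemma mem_Pid_of {k : ℤ} {x : F} (h : k ≤ V.ν x) : x ∈ Pid V k := Or.inr h

lemma nu_of_mem_Pid {k : ℤ} {x : F} (hx : x ∈ Pid V k) (h0 : x ≠ 0) : k ≤ V.ν x :=
  hx.resolve_left h0

lemma Pid_mono {k l : ℤ} (h : k ≤ l) : Pid V l ⊆ Pid V k :=
  fun _ hx => hx.imp id (fun h' => le_trans h h')

lemma Pid_add {k : ℤ} {x y : F} (hx : x ∈ Pid V k) (hy : y ∈ Pid V k) :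
    x + y ∈ Pid V k := by
  by_cases h0 : x = 0
  · simpa [h0] using hy
  by_cases h1 : y = 0
  · simpa [h1] using hx
  by_cases h2 : x + y = 0
  · exact Or.inl h2
  exact Or.inr (le_trans (le_min (nu_of_mem_Pid V hx h0) (nu_of_mem_Pid V hy h1))
    (V.hadd x y h0 h1 h2))

lemma Pid_neg {k : ℤ} {x : F} (hx : x ∈ Pid V k) : -x ∈ Pid V k := by
  by_cases h0 : x = 0
  · simp [h0, zero_mem_Pid]
  · exact Or.inr (by rw [nu_neg V h0]; exact nu_of_mem_Pid V hx h0)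

lemma Pid_mul {k l : ℤ} {x y : F} (hx : x ∈ Pid V k) (hy : y ∈ Pid V l) :
    x * y ∈ Pid V (k + l) := by
  by_cases h0 : x = 0
  · simp [h0, zero_mem_Pid]
  by_cases h1 : y = 0
  · simp [h1, zero_mem_Pid]
  exact Or.inr (by rw [V.hmul x y h0 h1]
                   exact add_le_add (nu_of_mem_Pid V hx h0) (nu_of_mem_Pid V hy h1))

lemma Pid_mul_unit {k : ℤ} {x y : F} (hx : x ∈ Pid V k) (hy : V.ν y = 0) :
    x * y ∈ Pid V k := by
  have := Pid_mul V hx (mem_Pid_of V (k := 0) (le_of_eq hy.symm))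
  simpa using this

lemma one_add_unit {x : F} (hx : x ∈ Pid V 1) : 1 + x ≠ 0 ∧ V.ν (1 + x) = 0 := by
  by_cases h0 : x = 0
  · simp [h0, nu_one]
  have hν : 1 ≤ V.ν x := nu_of_mem_Pid V hx h0
  have hne : 1 + x ≠ 0 := by
    intro h
    have : x = -1 := by linear_combination h
    rw [this, nu_neg_one] at hν; omega
  refine ⟨hne, ?_⟩
  have h1 : 0 ≤ V.ν (1 + x) := by
    have := V.hadd 1 x one_ne_zero h0 hne
    rw [nu_one] at this; omega
  have h2 : V.ν (1 + x) ≤ 0 := by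
    have h3 := V.hadd (1 + x) (-x) hne (neg_ne_zero.mpr h0) (by ring_nf; exact one_ne_zero)
    have h4 : (1 + x) + -x = 1 := by ring
    rw [h4, nu_one, nu_neg V h0] at h3; omega
  omega

lemma one_add_unit' {k : ℤ} {x : F} (hk : 1 ≤ k) (hx : x ∈ Pid V k) :
    1 + x ≠ 0 ∧ V.ν (1 + x) = 0 :=
  one_add_unit V (Pid_mono V hk hx)

lemma one_add_inv_mem {k : ℤ} {x : F} (hk : 1 ≤ k) (hx : x ∈ Pid V k) :
    (1 + x)⁻¹ - 1 ∈ Pid V k := by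
  obtain ⟨hne, hu⟩ := one_add_unit' V hk hx
  have hinv : V.ν (1 + x)⁻¹ = 0 := by rw [nu_inv V hne, hu]; ring
  have : (1 + x)⁻¹ - 1 = -x * (1 + x)⁻¹ := by field_simp; ring
  rw [this]
  exact Pid_mul_unit V (Pid_neg V hx) hinv

lemma one_add_mul_mem {k : ℤ} {x y : F} (hk : 1 ≤ k) (hx : x ∈ Pid V k)
    (hy : y ∈ Pid V k) : (1 + x) * (1 + y) - 1 ∈ Pid V k := by
  have h : (1 + x) * (1 + y) - 1 = x + y + x * y := by ring
  rw [h]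
  exact Pid_add V (Pid_add V hx hy)
    (Pid_mono V (by omega) (Pid_mul V hx hy))

lemma mulchar_one {α : F → ℂ} (hα : IsMulChar α) : α 1 = 1 := by
  have h := hα.2 1 1 one_ne_zero one_ne_zero
  rw [mul_one] at h
  have := hα.1 1 one_ne_zero
  field_simp at h
  tauto

end Aux
/-- Deligne's twisting formula: if `a(α) ≥ 2a(β)` then
`ε(αβ,ψ) = β(c)·ε(α,ψ)`, both epsilon factors given by Tate's sum formula
(note `a(αβ) = a(α)`). -/
theorem stmt7 (V : VData F) (α β ψ : F → ℂ) (aα aβ n : ℤ) (c : F) (T : Finset F)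
    (hα : IsMulChar α) (hβ : IsMulChar β)
    (haα : IsMulConductor V α aα) (haβ : IsMulConductor V β aβ)
    (hge : 2 * aβ ≤ aα)
    (hψ : IsAddChar ψ) (hn : IsAddConductor V ψ n)
    (hc : c ≠ 0) (hνc : V.ν c = aα + n)
    (hcα : ∀ x : F, x ≠ 0 → aα ≤ 2 * V.ν x → α (1 + x) = ψ (x / c))
    (hT : UnitReps V aα T) :
    α c * β c * (((V.q : ℝ) ^ (-(aα : ℝ) / 2) : ℝ) : ℂ) *
        ∑ x ∈ T, (α x * β x)⁻¹ * ψ (c⁻¹ * x) =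
      β c * (α c * (((V.q : ℝ) ^ (-(aα : ℝ) / 2) : ℝ) : ℂ) *
        ∑ x ∈ T, (α x)⁻¹ * ψ (c⁻¹ * x)) := by
  classical
  obtain ⟨hψadd, -⟩ := hψ
  have hψ0 : ψ 0 = 1 := hn.1 0 (zero_mem_Pid V _)
  have hψne : ∀ x : F, ψ x ≠ 0 := by
    intro x h
    have h2 := hψadd x (-x)
    rw [add_neg_cancel, hψ0, h, zero_mul] at h2
    exact one_ne_zero h2
  suffices hS : ∑ x ∈ T, (α x * β x)⁻¹ * ψ (c⁻¹ * x) = ∑ x ∈ T, (α x)⁻¹ * ψ (c⁻¹ * x) by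
    rw [hS]; ring
  rcases le_or_gt aβ 0 with hb | hb
  · -- aβ ≤ 0 : β is trivial on units
    have hβu : ∀ x ∈ Uni V, β x = 1 := by
      have h := haβ.2.1
      simp only [TrivOn, if_pos hb] at h
      exact h
    refine Finset.sum_congr rfl fun x hx => ?_
    rw [hβu x (hT.1 x hx), mul_one]
  -- main case : 1 ≤ aβ
  have ha2 : 2 ≤ aα := by omega
  set M : ℤ := aα - aα / 2 with hMdef
  have hM1 : 1 ≤ M := by omega
  have hMa : M ≤ aα := by omega
  have h2M : aα ≤ M + M := by omega
  have hMb : aβ ≤ M := by omega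
  have hmb : aβ ≤ aα / 2 := by omega
  have ha1 : (1:ℤ) ≤ aα := by omega
  -- triviality of the characters
  have hαa : ∀ y ∈ Pid V aα, α (1 + y) = 1 := by
    have h := haα.2.1
    simp only [TrivOn, if_neg (by omega : ¬ aα ≤ 0)] at h
    exact h
  have hβb : ∀ y ∈ Pid V aβ, β (1 + y) = 1 := by
    have h := haβ.2.1
    simp only [TrivOn, if_neg (by omega : ¬ aβ ≤ 0)] at h
    exact h
  have hαval : ∀ y ∈ Pid V M, α (1 + y) = ψ (c⁻¹ * y) := by
    intro y hy
    by_cases h0 : y = 0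
    · rw [h0]; simp [mulchar_one hα, hψ0]
    · rw [hcα y h0 (by have := nu_of_mem_Pid V hy h0; omega), div_eq_mul_inv, mul_comm]
  -- relation lemmas
  have hrel_refl : ∀ x : F, x ≠ 0 → x * x⁻¹ - 1 ∈ Pid V M := by
    intro x hx
    rw [mul_inv_cancel₀ hx, sub_self]
    exact zero_mem_Pid V _
  have hrel_symm : ∀ x t : F, x ≠ 0 → t ≠ 0 → x * t⁻¹ - 1 ∈ Pid V M →
      t * x⁻¹ - 1 ∈ Pid V M := by
    intro x t hx ht hw
    have h1 := one_add_inv_mem V hM1 hw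
    have e : (1 + (x * t⁻¹ - 1))⁻¹ = t * x⁻¹ := by
      rw [show (1:F) + (x * t⁻¹ - 1) = x * t⁻¹ by ring, mul_inv, inv_inv, mul_comm]
    rwa [e] at h1
  have hrel_trans : ∀ x t z : F, t ≠ 0 → x * t⁻¹ - 1 ∈ Pid V M →
      t * z⁻¹ - 1 ∈ Pid V M → x * z⁻¹ - 1 ∈ Pid V M := by
    intro x t z ht h1 h2
    have e : x * z⁻¹ - 1 = (1 + (x * t⁻¹ - 1)) * (1 + (t * z⁻¹ - 1)) - 1 := by
      field_simp
      ring
    rw [e]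
    exact one_add_mul_mem V hM1 h1 h2
  -- unit facts for elements of T
  have hTu : ∀ t ∈ T, t ≠ 0 ∧ V.ν t = 0 := fun t ht => hT.1 t ht
  -- the class function g
  have hgex : ∀ x ∈ T, (T.filter (fun t => x * t⁻¹ - 1 ∈ Pid V M)).Nonempty := by
    intro x hx
    exact ⟨x, Finset.mem_filter.mpr ⟨hx, hrel_refl x (hTu x hx).1⟩⟩
  set g : F → F := fun x =>
    if h : (T.filter (fun t => x * t⁻¹ - 1 ∈ Pid V M)).Nonempty then Exists.choose h else 0
    with hg
  have hgmem : ∀ x ∈ T, g x ∈ T ∧ x * (g x)⁻¹ - 1 ∈ Pid V M := by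
    intro x hx
    have h := hgex x hx
    have hs := Exists.choose_spec h
    rw [hg]
    simp only [dif_pos h]
    exact Finset.mem_filter.mp hs
  have hgcong : ∀ x ∈ T, ∀ y ∈ T, x * y⁻¹ - 1 ∈ Pid V M → g x = g y := by
    intro x hx y hy hxy
    have hfe : T.filter (fun t => x * t⁻¹ - 1 ∈ Pid V M)
        = T.filter (fun t => y * t⁻¹ - 1 ∈ Pid V M) := by
      apply Finset.filter_congr
      intro t ht
      have hx0 := (hTu x hx).1
      have hy0 := (hTu y hy).1
      constructor
      · intro h
        exact hrel_trans y x t hx0 (hrel_symm x y hx0 hy0 hxy) h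
      · intro h
        exact hrel_trans x y t hy0 hxy h
    simp only [hg, hfe]
  have hfiber : ∀ s ∈ T.image g, ∀ x ∈ T, (g x = s ↔ x * s⁻¹ - 1 ∈ Pid V M) := by
    intro s hs x hx
    obtain ⟨x', hx', rfl⟩ := Finset.mem_image.mp hs
    have hgx' := hgmem x' hx'
    constructor
    · intro h
      rw [← h]
      exact (hgmem x hx).2
    · intro h
      have hrel : x * x'⁻¹ - 1 ∈ Pid V M :=
        hrel_trans x (g x') x' (hTu _ hgx'.1).1 h
          (hrel_symm x' (g x') (hTu x' hx').1 (hTu _ hgx'.1).1 hgx'.2)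
      exact hgcong x hx x' hx' hrel
  -- the representative function
  set rep : F → F := fun x => if h : x ∈ Uni V then Exists.choose (hT.2 x h) else 0 with hrep
  have hrepT : ∀ x, (hx : x ∈ Uni V) → rep x ∈ T ∧ x * (rep x)⁻¹ - 1 ∈ Pid V aα := by
    intro x hx
    rw [hrep]
    simp only [dif_pos hx]
    exact (Exists.choose_spec (hT.2 x hx)).1
  have hrepU : ∀ x, (hx : x ∈ Uni V) → ∀ t ∈ T, x * t⁻¹ - 1 ∈ Pid V aα → t = rep x := by
    intro x hx t ht hr
    rw [hrep]
    simp only [dif_pos hx]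
    exact (Exists.choose_spec (hT.2 x hx)).2 t ⟨ht, hr⟩
  -- fiberwise decomposition
  rw [← sub_eq_zero, ← Finset.sum_sub_distrib]
  rw [← Finset.sum_fiberwise_of_maps_to (g := g) (fun x hx => Finset.mem_image_of_mem g hx)]
  apply Finset.sum_eq_zero
  intro s hs
  obtain ⟨x', hx'T, hgx'⟩ := Finset.mem_image.mp hs
  have hsT : s ∈ T := hgx' ▸ (hgmem x' hx'T).1
  obtain ⟨hs0, hsν⟩ := hTu s hsT
  by_cases hcase : s - 1 ∈ Pid V (aα / 2)
  · -- all β x = 1 on this fiber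
    apply Finset.sum_eq_zero
    intro x hx
    obtain ⟨hxT, hgxs⟩ := Finset.mem_filter.mp hx
    have hrel : x * s⁻¹ - 1 ∈ Pid V M := (hfiber s hs x hxT).mp hgxs
    have hx1 : x - 1 ∈ Pid V aβ := by
      have e : x - 1 = (x * s⁻¹ - 1) * s + (s - 1) := by field_simp; ring
      rw [e]
      exact Pid_add V (Pid_mono V hMb (Pid_mul_unit V hrel hsν)) (Pid_mono V hmb hcase)
    have hβx : β x = 1 := by
      have h := hβb (x - 1) hx1
      rwa [show (1:F) + (x - 1) = x by ring] at h
    rw [hβx, mul_one, sub_self]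
  · -- Gauss sum vanishes
    have hs1ne : s - 1 ≠ 0 := fun h => hcase (h ▸ zero_mem_Pid V _)
    have hs1lt : V.ν (s - 1) < aα / 2 := by
      by_contra h
      exact hcase (Or.inr (le_of_not_gt h))
    have hs1ν0 : 0 ≤ V.ν (s - 1) := by
      have e : s - 1 = s + -1 := by ring
      have h := V.hadd s (-1) hs0 (by norm_num) (by rw [← e]; exact hs1ne)
      rw [hsν, nu_neg_one] at h
      rw [e]; omega
    obtain ⟨x₀, hx₀P, hx₀ψ⟩ := hn.2
    have hx₀0 : x₀ ≠ 0 := by intro h; exact hx₀ψ (h ▸ hψ0)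
    have hx₀ν : -n - 1 ≤ V.ν x₀ := nu_of_mem_Pid V hx₀P hx₀0
    set y0 : F := x₀ * c * (s - 1)⁻¹ with hy0def
    have hy00 : y0 ≠ 0 := mul_ne_zero (mul_ne_zero hx₀0 hc) (inv_ne_zero hs1ne)
    have hy0ν : V.ν y0 = V.ν x₀ + (aα + n) - V.ν (s - 1) := by
      rw [hy0def, V.hmul _ _ (mul_ne_zero hx₀0 hc) (inv_ne_zero hs1ne),
        V.hmul _ _ hx₀0 hc, nu_inv V hs1ne, hνc]
      ring
    have hy0M : y0 ∈ Pid V M := Or.inr (by omega)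
    have hdy0 : (s - 1) * c⁻¹ * y0 = x₀ := by
      rw [hy0def]; field_simp
    set f : F → ℂ := fun x => ψ ((s - 1) * c⁻¹ * (x * s⁻¹ - 1)) with hf
    set u : F := 1 + y0 with hudef
    obtain ⟨hu0, huν⟩ := one_add_unit' V hM1 hy0M
    have huM : u - 1 ∈ Pid V M := by
      rw [hudef, show (1:F) + y0 - 1 = y0 by ring]; exact hy0M
    have huinvM : u⁻¹ - 1 ∈ Pid V M := one_add_inv_mem V hM1 hy0M
    -- the fiber
    set Fib : Finset F := T.filter (fun x => g x = s) with hFib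
    have hFibmem : ∀ x ∈ Fib, x ∈ T ∧ x * s⁻¹ - 1 ∈ Pid V M := by
      intro x hx
      obtain ⟨hxT, hgxs⟩ := Finset.mem_filter.mp hx
      exact ⟨hxT, (hfiber s hs x hxT).mp hgxs⟩
    -- stability of the fiber under multiplicative shift
    have hmaps : ∀ v : F, v ≠ 0 → V.ν v = 0 → v - 1 ∈ Pid V M →
        ∀ x ∈ Fib, rep (x * v) ∈ Fib := by
      intro v hv0 hvν hvM x hxF
      obtain ⟨hxT, hxrel⟩ := hFibmem x hxF
      obtain ⟨hx0, hxν⟩ := hTu x hxT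
      have hxvU : x * v ∈ Uni V :=
        ⟨mul_ne_zero hx0 hv0, by rw [V.hmul x v hx0 hv0, hxν, hvν]; ring⟩
      obtain ⟨htT, htrel⟩ := hrepT (x * v) hxvU
      obtain ⟨ht0, htν⟩ := hTu _ htT
      have hsymm : rep (x * v) * (x * v)⁻¹ - 1 ∈ Pid V M :=
        hrel_symm (x * v) (rep (x * v)) hxvU.1 ht0 (Pid_mono V hMa htrel)
      have hrelx : rep (x * v) * x⁻¹ - 1 ∈ Pid V M := by
        have e : rep (x * v) * x⁻¹ - 1
            = (1 + (rep (x * v) * (x * v)⁻¹ - 1)) * (1 + (v - 1)) - 1 := by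
          field_simp
          ring
        rw [e]
        exact one_add_mul_mem V hM1 hsymm hvM
      have hrels : rep (x * v) * s⁻¹ - 1 ∈ Pid V M := hrel_trans _ x _ hx0 hrelx hxrel
      rw [hFib]
      exact Finset.mem_filter.mpr ⟨htT, (hfiber s hs _ htT).mpr hrels⟩
    have hinv : ∀ v : F, v ≠ 0 → V.ν v = 0 → ∀ x ∈ Fib, x * v ∈ Uni V →
        rep (rep (x * v) * v⁻¹) = x := by
      intro v hv0 hvν x hxF hxvU
      obtain ⟨hxT, hxrel⟩ := hFibmem x hxF
      obtain ⟨hx0, hxν⟩ := hTu x hxT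
      obtain ⟨htT, htrel⟩ := hrepT (x * v) hxvU
      obtain ⟨ht0, htν⟩ := hTu _ htT
      have hU : rep (x * v) * v⁻¹ ∈ Uni V :=
        ⟨mul_ne_zero ht0 (inv_ne_zero hv0), by
          rw [V.hmul _ _ ht0 (inv_ne_zero hv0), htν, nu_inv V hv0, hvν]; ring⟩
      refine (hrepU (rep (x * v) * v⁻¹) hU x hxT ?_).symm
      have e : rep (x * v) * v⁻¹ * x⁻¹ - 1 = (1 + (x * v * (rep (x * v))⁻¹ - 1))⁻¹ - 1 := by
        rw [show (1:F) + (x * v * (rep (x * v))⁻¹ - 1) = x * v * (rep (x * v))⁻¹ by ring]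
        rw [mul_inv, mul_inv, inv_inv]
        ring
      rw [e]
      exact one_add_inv_mem V ha1 htrel
    -- the shift bijection multiplies f by ψ x₀
    have hval : ∀ x ∈ Fib, ψ x₀ * f x = f (rep (x * u)) := by
      intro x hxF
      obtain ⟨hxT, hxrel⟩ := hFibmem x hxF
      obtain ⟨hx0, hxν⟩ := hTu x hxT
      have hxvU : x * u ∈ Uni V :=
        ⟨mul_ne_zero hx0 hu0, by rw [V.hmul x u hx0 hu0, hxν, huν]; ring⟩
      obtain ⟨htT, htrel⟩ := hrepT (x * u) hxvU
      obtain ⟨ht0, htν⟩ := hTu _ htT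
      set t : F := rep (x * u) with htdef
      -- δ := t s⁻¹ - x s⁻¹ - y0 ∈ Pid aα
      have hE : (1 + (x * u * t⁻¹ - 1))⁻¹ - 1 ∈ Pid V aα := one_add_inv_mem V ha1 htrel
      have hδeq : t * s⁻¹ - x * s⁻¹ - y0
          = (x * s⁻¹ - 1) * y0
            + (1 + (x * s⁻¹ - 1)) * u * ((1 + (x * u * t⁻¹ - 1))⁻¹ - 1) := by
        rw [show (1:F) + (x * u * t⁻¹ - 1) = x * u * t⁻¹ by ring]
        rw [hudef]
        field_simp
        ring
      have hδ : t * s⁻¹ - x * s⁻¹ - y0 ∈ Pid V aα := by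
        rw [hδeq]
        refine Pid_add V (Pid_mono V h2M (Pid_mul V hxrel hy0M)) ?_
        have h1 : (1 + (x * s⁻¹ - 1)) * u ∈ Pid V 0 := by
          refine Or.inr ?_
          have := one_add_unit' V hM1 hxrel
          rw [V.hmul _ _ this.1 hu0, this.2, huν]
          omega
        have := Pid_mul V h1 hE
        simpa using this
      have hδψ : ψ ((s - 1) * c⁻¹ * (t * s⁻¹ - x * s⁻¹ - y0)) = 1 := by
        apply hn.1
        have h1 : (s - 1) * c⁻¹ ∈ Pid V (V.ν (s - 1) - (aα + n)) := by
          refine Or.inr ?_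
          rw [V.hmul _ _ hs1ne (inv_ne_zero hc), nu_inv V hc, hνc]
          omega
        have h2 := Pid_mul V h1 hδ
        refine Pid_mono V (by omega) h2
      have hsplit : (s - 1) * c⁻¹ * (t * s⁻¹ - 1)
          = x₀ + (s - 1) * c⁻¹ * (x * s⁻¹ - 1)
            + (s - 1) * c⁻¹ * (t * s⁻¹ - x * s⁻¹ - y0) := by
        rw [← hdy0]; ring
      rw [hf]
      show ψ x₀ * ψ ((s - 1) * c⁻¹ * (x * s⁻¹ - 1)) = ψ ((s - 1) * c⁻¹ * (t * s⁻¹ - 1))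
      rw [hsplit, hψadd, hψadd, hδψ, mul_one]
    -- conclude H = 0
    have hbij : ∑ x ∈ Fib, (ψ x₀ * f x) = ∑ x ∈ Fib, f x := by
      refine Finset.sum_nbij' (fun x => rep (x * u)) (fun x => rep (x * u⁻¹))
        (hmaps u hu0 huν huM) (hmaps u⁻¹ (inv_ne_zero hu0) (by rw [nu_inv V hu0, huν]; ring) huinvM)
        ?_ ?_ hval
      · intro x hxF
        obtain ⟨hxT, -⟩ := hFibmem x hxF
        obtain ⟨hx0, hxν⟩ := hTu x hxT
        exact hinv u hu0 huν x hxF ⟨mul_ne_zero hx0 hu0, by rw [V.hmul x u hx0 hu0, hxν, huν]; ring⟩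
      · intro x hxF
        obtain ⟨hxT, -⟩ := hFibmem x hxF
        obtain ⟨hx0, hxν⟩ := hTu x hxT
        have h := hinv u⁻¹ (inv_ne_zero hu0) (by rw [nu_inv V hu0, huν]; ring) x hxF
          ⟨mul_ne_zero hx0 (inv_ne_zero hu0), by
            rw [V.hmul x u⁻¹ hx0 (inv_ne_zero hu0), hxν, nu_inv V hu0, huν]; ring⟩
        rwa [inv_inv] at h
    rw [← Finset.mul_sum] at hbij
    have hH : ∑ x ∈ Fib, f x = 0 := by
      have h2 : (ψ x₀ - 1) * (∑ x ∈ Fib, f x) = 0 := by linear_combination hbij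
      rcases mul_eq_zero.mp h2 with h | h
      · exact absurd (sub_eq_zero.mp h) hx₀ψ
      · exact h
    -- rewrite each term of the fiber sum
    have hterm : ∀ x ∈ Fib, (α x * β x)⁻¹ * ψ (c⁻¹ * x) - (α x)⁻¹ * ψ (c⁻¹ * x)
        = ((β s)⁻¹ - 1) * ((α s)⁻¹ * ψ (c⁻¹ * s)) * f x := by
      intro x hxF
      obtain ⟨hxT, hxrel⟩ := hFibmem x hxF
      obtain ⟨hx0, hxν⟩ := hTu x hxT
      obtain ⟨h1y0', h1yν⟩ := one_add_unit' V hM1 hxrel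
      have hx_eq : x = s * (1 + (x * s⁻¹ - 1)) := by field_simp; ring
      have hαx : α x = α s * ψ (c⁻¹ * (x * s⁻¹ - 1)) := by
        rw [← hαval _ hxrel, ← hα.2 s _ hs0 h1y0', ← hx_eq]
      have hβx : β x = β s := by
        conv_lhs => rw [hx_eq]
        rw [hβ.2 s _ hs0 h1y0', hβb _ (Pid_mono V hMb hxrel), mul_one]
      have hψx : ψ (c⁻¹ * x) = ψ (c⁻¹ * s) * (ψ (c⁻¹ * (x * s⁻¹ - 1)) * f x) := by
        conv_lhs => rw [hx_eq]
        rw [hf]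
        show ψ (c⁻¹ * (s * (1 + (x * s⁻¹ - 1))))
          = ψ (c⁻¹ * s) * (ψ (c⁻¹ * (x * s⁻¹ - 1)) * ψ ((s - 1) * c⁻¹ * (x * s⁻¹ - 1)))
        rw [← hψadd, ← hψadd]
        congr 1
        ring
      have hαs : α s ≠ 0 := hα.1 s hs0
      have hβs : β s ≠ 0 := hβ.1 s hs0
      have hψy : ψ (c⁻¹ * (x * s⁻¹ - 1)) ≠ 0 := hψne _
      rw [hαx, hβx, hψx]
      generalize hP : ψ (c⁻¹ * (x * s⁻¹ - 1)) = P at hψy ⊢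
      generalize ψ (c⁻¹ * s) = S
      field_simp
    rw [Finset.sum_congr rfl hterm, ← Finset.mul_sum, hH, mul_zero]
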